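/- arXiv:2601.22969 — 3 statements merged into one kernel-verified Lean document; each statement's English description precedes it below -/
import Mathlib

section
/- Let X ⊆ ℝ^d, let V be a real symmetric positive definite d×d matrix, let θ*, θ̂ ∈ ℝ^d and β ≥ 0 satisfy ‖θ̂ - θ*‖_V ≤ β. Suppose x_t ∈ X satisfies ⟨θ̂, x_t⟩ + β·‖x_t‖_{V⁻¹} ≥ ⟨θ̂, x⟩ + β·‖x‖_{V⁻¹} for every x ∈ X. Then for every x ∈ X, ⟨θ*, x⟩ - ⟨θ*, x_t⟩ ≤ 2·β·‖x_t‖_{V⁻¹}. -/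
open Matrix

lemma herm_dot (d : ℕ) (V : Matrix (Fin d) (Fin d) ℝ) (hV : V.IsHermitian)
    (u w : Fin d → ℝ) : u ⬝ᵥ (V *ᵥ w) = w ⬝ᵥ (V *ᵥ u) := by
  rw [dotProduct_mulVec, dotProduct_comm, ← mulVec_transpose]
  congr 1
  exact congrArg (· *ᵥ u) (by simpa [conjTranspose_eq_transpose_of_trivial] using hV.eq)

lemma cs_bilin (d : ℕ) (V : Matrix (Fin d) (Fin d) ℝ) (hV : V.PosSemidef)
    (u w : Fin d → ℝ) :
    (u ⬝ᵥ (V *ᵥ w))^2 ≤ (u ⬝ᵥ (V *ᵥ u)) * (w ⬝ᵥ (V *ᵥ w)) := by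
  have key : ∀ t : ℝ, 0 ≤ (w ⬝ᵥ (V *ᵥ w)) * t^2 + (2 * (u ⬝ᵥ (V *ᵥ w))) * t
      + (u ⬝ᵥ (V *ᵥ u)) := by
    intro t
    have h := hV.dotProduct_mulVec_nonneg (u + t • w)
    simp only [star_trivial] at h
    have expand : (u + t • w) ⬝ᵥ (V *ᵥ (u + t • w)) =
        (w ⬝ᵥ (V *ᵥ w)) * t^2 + (2 * (u ⬝ᵥ (V *ᵥ w))) * t + (u ⬝ᵥ (V *ᵥ u)) := by
      simp only [mulVec_add, mulVec_smul, add_dotProduct, smul_dotProduct, dotProduct_add,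
        dotProduct_smul, smul_eq_mul, herm_dot d V hV.1 w u]
      ring
    linarith [h.trans_eq expand]
  have key' : ∀ t : ℝ, 0 ≤ (w ⬝ᵥ (V *ᵥ w)) * (t * t) + (2 * (u ⬝ᵥ (V *ᵥ w))) * t
      + (u ⬝ᵥ (V *ᵥ u)) := by
    intro t; have := key t; nlinarith [this]
  have hd := discrim_le_zero key'
  rw [discrim] at hd
  nlinarith [hd]

lemma cs_dual (d : ℕ) (V : Matrix (Fin d) (Fin d) ℝ) (hV : V.PosDef)
    (u x : Fin d → ℝ) :
    u ⬝ᵥ x ≤ Real.sqrt (u ⬝ᵥ (V *ᵥ u)) * Real.sqrt (x ⬝ᵥ (V⁻¹ *ᵥ x)) := by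
  set w := V⁻¹ *ᵥ x with hw
  have hdet : IsUnit V.det := isUnit_iff_ne_zero.mpr (ne_of_gt hV.det_pos)
  have hx : V *ᵥ w = x := by
    rw [hw, mulVec_mulVec, mul_nonsing_inv V hdet, one_mulVec]
  have h1 : x ⬝ᵥ (V⁻¹ *ᵥ x) = w ⬝ᵥ (V *ᵥ w) := by
    rw [← hw, ← hx]; exact dotProduct_comm _ _
  have h2 : u ⬝ᵥ x = u ⬝ᵥ (V *ᵥ w) := by rw [hx]
  have hcs := cs_bilin d V hV.posSemidef u w
  have hu : 0 ≤ u ⬝ᵥ (V *ᵥ u) := by simpa using hV.posSemidef.dotProduct_mulVec_nonneg u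
  have hww : 0 ≤ w ⬝ᵥ (V *ᵥ w) := by simpa using hV.posSemidef.dotProduct_mulVec_nonneg w
  rw [h1, h2]
  calc u ⬝ᵥ (V *ᵥ w) ≤ |u ⬝ᵥ (V *ᵥ w)| := le_abs_self _
    _ = Real.sqrt ((u ⬝ᵥ (V *ᵥ w))^2) := (Real.sqrt_sq_eq_abs _).symm
    _ ≤ Real.sqrt ((u ⬝ᵥ (V *ᵥ u)) * (w ⬝ᵥ (V *ᵥ w))) := Real.sqrt_le_sqrt hcs
    _ = Real.sqrt (u ⬝ᵥ (V *ᵥ u)) * Real.sqrt (w ⬝ᵥ (V *ᵥ w)) := Real.sqrt_mul hu _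

/-- Instantaneous regret of the UCB arm: if `‖θ̂ - θ*‖_V ≤ β` and `x_t`
maximizes the upper confidence bound `⟨θ̂, x⟩ + β·‖x‖_{V⁻¹}` over `X`, then
for every `x ∈ X`, `⟨θ*, x⟩ - ⟨θ*, x_t⟩ ≤ 2·β·‖x_t‖_{V⁻¹}`. -/
theorem stmt_12 (d : ℕ) (X : Set (Fin d → ℝ))
    (V : Matrix (Fin d) (Fin d) ℝ) (hV : V.PosDef)
    (θ θhat : Fin d → ℝ) (β : ℝ) (hβ : 0 ≤ β)
    (hconf : Real.sqrt ((θhat - θ) ⬝ᵥ (V *ᵥ (θhat - θ))) ≤ β)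
    (xt : Fin d → ℝ) (hxt : xt ∈ X)
    (hmax : ∀ x ∈ X,
      θhat ⬝ᵥ x + β * Real.sqrt (x ⬝ᵥ (V⁻¹ *ᵥ x)) ≤
        θhat ⬝ᵥ xt + β * Real.sqrt (xt ⬝ᵥ (V⁻¹ *ᵥ xt))) :
    ∀ x ∈ X, θ ⬝ᵥ x - θ ⬝ᵥ xt ≤ 2 * β * Real.sqrt (xt ⬝ᵥ (V⁻¹ *ᵥ xt)) := by
  intro x hx
  set u := θhat - θ with hu
  have huV : 0 ≤ Real.sqrt (u ⬝ᵥ (V *ᵥ u)) := Real.sqrt_nonneg _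
  have hx2 : 0 ≤ Real.sqrt (x ⬝ᵥ (V⁻¹ *ᵥ x)) := Real.sqrt_nonneg _
  have hxt2 : 0 ≤ Real.sqrt (xt ⬝ᵥ (V⁻¹ *ᵥ xt)) := Real.sqrt_nonneg _
  -- (θ - θhat) ⬝ᵥ x ≤ β * ‖x‖
  have h1 : (θ - θhat) ⬝ᵥ x ≤ β * Real.sqrt (x ⬝ᵥ (V⁻¹ *ᵥ x)) := by
    have := cs_dual d V hV (θ - θhat) x
    have heq : (θ - θhat) ⬝ᵥ (V *ᵥ (θ - θhat)) = u ⬝ᵥ (V *ᵥ u) := by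
      have : θ - θhat = -u := (neg_sub θhat θ).symm.trans (by rw [hu])
      rw [this]; simp [mulVec_neg]
    calc (θ - θhat) ⬝ᵥ x
        ≤ Real.sqrt ((θ - θhat) ⬝ᵥ (V *ᵥ (θ - θhat))) * Real.sqrt (x ⬝ᵥ (V⁻¹ *ᵥ x)) := this
      _ = Real.sqrt (u ⬝ᵥ (V *ᵥ u)) * Real.sqrt (x ⬝ᵥ (V⁻¹ *ᵥ x)) := by rw [heq]
      _ ≤ β * Real.sqrt (x ⬝ᵥ (V⁻¹ *ᵥ x)) := mul_le_mul_of_nonneg_right hconf hx2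
  have h2 : u ⬝ᵥ xt ≤ β * Real.sqrt (xt ⬝ᵥ (V⁻¹ *ᵥ xt)) := by
    have := cs_dual d V hV u xt
    calc u ⬝ᵥ xt ≤ Real.sqrt (u ⬝ᵥ (V *ᵥ u)) * Real.sqrt (xt ⬝ᵥ (V⁻¹ *ᵥ xt)) := this
      _ ≤ β * Real.sqrt (xt ⬝ᵥ (V⁻¹ *ᵥ xt)) := mul_le_mul_of_nonneg_right hconf hxt2
  have h3 := hmax x hx
  have e1 : θ ⬝ᵥ x = θhat ⬝ᵥ x + (θ - θhat) ⬝ᵥ x := by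
    rw [sub_dotProduct]; ring
  have e2 : θhat ⬝ᵥ xt - θ ⬝ᵥ xt = u ⬝ᵥ xt := by
    rw [hu, sub_dotProduct]
  linarith
end

section
/- Let x_1, …, x_t ∈ ℝ^d satisfy ‖x_s‖₂ ≤ 1 for all 1 ≤ s ≤ t, let α > 0, and define V̄_s = α·I_d + ∑_{j=1}^s x_j·x_jᵀ. Then: (i) if α ≥ 1, ∑_{s=1}^t ‖x_s‖²_{V̄_{s-1}⁻¹} ≤ 2·log(det(V̄_t)/α^d); and (ii) for any α > 0, det(V̄_t) ≤ (α + t/d)^d. -/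
open Matrix Finset


namespace Stmt13Aux

variable {d : ℕ}

lemma vecMulVec_mulVec' (a y : Fin d → ℝ) : vecMulVec a a *ᵥ y = (a ⬝ᵥ y) • a := by
  ext i
  simp only [mulVec, dotProduct, vecMulVec_apply, Pi.smul_apply, smul_eq_mul]
  rw [Finset.sum_mul]
  exact Finset.sum_congr rfl fun j _ => by ring

lemma sum_mulVec' {ι : Type*} (s : Finset ι) (M : ι → Matrix (Fin d) (Fin d) ℝ)
    (y : Fin d → ℝ) : (∑ j ∈ s, M j) *ᵥ y = ∑ j ∈ s, M j *ᵥ y := by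
  induction s using Finset.cons_induction with
  | empty => simp
  | cons a s ha ih => simp [Finset.sum_cons, Matrix.add_mulVec, ih]

lemma dotProduct_sum' {ι : Type*} (s : Finset ι) (y : Fin d → ℝ) (v : ι → Fin d → ℝ) :
    y ⬝ᵥ ∑ j ∈ s, v j = ∑ j ∈ s, y ⬝ᵥ v j := by
  induction s using Finset.cons_induction with
  | empty => simp
  | cons a s ha ih => simp [Finset.sum_cons, dotProduct_add, ih]

def Mm (α : ℝ) (x : ℕ → Fin d → ℝ) (s : ℕ) : Matrix (Fin d) (Fin d) ℝ :=
  α • 1 + ∑ j ∈ Finset.Icc 1 s, vecMulVec (x j) (x j)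

lemma quad (α : ℝ) (x : ℕ → Fin d → ℝ) (s : ℕ) (y : Fin d → ℝ) :
    y ⬝ᵥ (Mm α x s *ᵥ y) = α * (y ⬝ᵥ y) + ∑ j ∈ Finset.Icc 1 s, (x j ⬝ᵥ y) ^ 2 := by
  unfold Mm
  rw [Matrix.add_mulVec, dotProduct_add, smul_mulVec, one_mulVec, dotProduct_smul,
    sum_mulVec', dotProduct_sum', smul_eq_mul]
  congr 1
  exact Finset.sum_congr rfl fun j _ => by
    rw [vecMulVec_mulVec', dotProduct_smul, smul_eq_mul, dotProduct_comm, sq]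

lemma herm (α : ℝ) (x : ℕ → Fin d → ℝ) (s : ℕ) : (Mm α x s).IsHermitian := by
  show (Mm α x s)ᴴ = Mm α x s
  ext i j
  simp [Mm, Matrix.one_apply, Matrix.sum_apply, vecMulVec_apply, mul_comm, eq_comm]

lemma posdef {α : ℝ} (hα : 0 < α) (x : ℕ → Fin d → ℝ) (s : ℕ) : (Mm α x s).PosDef := by
  refine Matrix.PosDef.of_dotProduct_mulVec_pos (herm α x s) fun y hy => ?_
  rw [star_trivial, quad]
  have h1 : 0 < y ⬝ᵥ y := by
    have h2 : y ⬝ᵥ y ≠ 0 := fun h => hy (dotProduct_self_eq_zero.mp h)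
    have h3 : 0 ≤ y ⬝ᵥ y := Finset.sum_nonneg fun i _ => mul_self_nonneg _
    exact lt_of_le_of_ne h3 (Ne.symm h2)
  have h4 : 0 ≤ ∑ j ∈ Finset.Icc 1 s, (x j ⬝ᵥ y) ^ 2 :=
    Finset.sum_nonneg fun j _ => sq_nonneg _
  nlinarith

lemma Icc_succ_right' (n : ℕ) : Finset.Icc 1 (n + 1) = insert (n + 1) (Finset.Icc 1 n) := by
  ext k
  simp only [Finset.mem_Icc, Finset.mem_insert]
  omega

lemma Mm_succ (α : ℝ) (x : ℕ → Fin d → ℝ) {s : ℕ} (hs : 1 ≤ s) :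
    Mm α x s = Mm α x (s - 1) + vecMulVec (x s) (x s) := by
  obtain ⟨k, rfl⟩ : ∃ k, s = k + 1 := ⟨s - 1, by omega⟩
  unfold Mm
  rw [Icc_succ_right', Finset.sum_insert (by simp)]
  simp only [Nat.add_sub_cancel]
  abel

lemma det_step {A : Matrix (Fin d) (Fin d) ℝ} (hA : A.PosDef) (u : Fin d → ℝ) :
    (A + vecMulVec u u).det = A.det * (1 + u ⬝ᵥ (A⁻¹ *ᵥ u)) := by
  have hdet : IsUnit A.det := isUnit_iff_ne_zero.mpr hA.det_pos.ne'
  rw [vecMulVec_eq Unit, Matrix.det_add_replicateCol_mul_replicateRow (ι := Unit) hdet,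
    Matrix.det_unique (1 + replicateRow Unit u * A⁻¹ * replicateCol Unit u)]
  congr 1
  rw [Matrix.add_apply, Matrix.one_apply_eq, ← Matrix.replicateRow_vecMul, Matrix.replicateRow_mul_replicateCol_apply]
  congr 1
  have hsymm : (A⁻¹)ᵀ = A⁻¹ := by
    have := hA.inv.isHermitian
    rwa [Matrix.IsHermitian, conjTranspose_eq_transpose_of_trivial] at this
  rw [← hsymm, Matrix.mulVec_transpose, hsymm, dotProduct_comm]

lemma telescope (f : ℕ → ℝ) (t : ℕ) :
    ∑ s ∈ Finset.Icc 1 t, (f s - f (s - 1)) = f t - f 0 := by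
  induction t with
  | zero => simp
  | succ n ih =>
      rw [Icc_succ_right', Finset.sum_insert (by simp), ih]
      simp only [Nat.add_sub_cancel]
      ring

lemma le_two_log {u : ℝ} (h0 : 0 ≤ u) (h1 : u ≤ 1) : u ≤ 2 * Real.log (1 + u) := by
  have hb : 0 < 1 - u / 2 := by linarith
  have ha : 1 - u / 2 ≤ Real.exp (-(u / 2)) := by
    have := Real.add_one_le_exp (-(u / 2)); linarith
  have hc : Real.exp (u / 2) * (1 - u / 2) ≤ 1 := by
    calc Real.exp (u / 2) * (1 - u / 2) ≤ Real.exp (u / 2) * Real.exp (-(u / 2)) :=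
          mul_le_mul_of_nonneg_left ha (Real.exp_pos _).le
      _ = 1 := by rw [← Real.exp_add]; simp
  have h2 : Real.exp (u / 2) ≤ 1 + u := by nlinarith [Real.exp_pos (u / 2)]
  have h3 : u / 2 ≤ Real.log (1 + u) := by
    rw [Real.le_log_iff_exp_le (by linarith)]
    exact h2
  linarith

lemma geom_le {lam : Fin d → ℝ} (hd : 0 < d) (hnn : ∀ i, 0 ≤ lam i) {c : ℝ}
    (hsum : ∑ i, lam i ≤ c * d) : ∏ i, lam i ≤ c ^ d := by
  have hdR : (0 : ℝ) < d := Nat.cast_pos.mpr hd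
  have hc : 0 ≤ c := by
    have h0 : (0 : ℝ) ≤ ∑ i, lam i := Finset.sum_nonneg fun i _ => hnn i
    nlinarith
  have key : ∏ i, lam i ^ (1 / (d : ℝ)) ≤ c := by
    calc ∏ i, lam i ^ (1 / (d : ℝ))
        ≤ ∑ i : Fin d, (1 / (d : ℝ)) * lam i :=
          Real.geom_mean_le_arith_mean_weighted Finset.univ _ _
            (fun i _ => by positivity)
            (by simp [Finset.sum_const, Finset.card_univ]; field_simp)
            (fun i _ => hnn i)
      _ = (∑ i, lam i) / d := by rw [← Finset.mul_sum]; ring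
      _ ≤ c := by rw [div_le_iff₀ hdR]; linarith
  calc ∏ i, lam i = (∏ i, lam i ^ (1 / (d : ℝ))) ^ d := by
        rw [← Finset.prod_pow]
        refine (Finset.prod_congr rfl fun i _ => ?_).symm
        rw [← Real.rpow_natCast (lam i ^ (1 / (d : ℝ))) d, ← Real.rpow_mul (hnn i),
          one_div, inv_mul_cancel₀ (by positivity), Real.rpow_one]
    _ ≤ c ^ d :=
        pow_le_pow_left₀ (Finset.prod_nonneg fun i _ => Real.rpow_nonneg (hnn i) _) key d

lemma trace_eq_sum_eigs {A : Matrix (Fin d) (Fin d) ℝ} (hA : A.IsHermitian) :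
    A.trace = ∑ i, hA.eigenvalues i := by
  simpa [RCLike.ofReal_real_eq_id] using hA.trace_eq_sum_eigenvalues

lemma trace_vecMulVec' (a : Fin d → ℝ) : (vecMulVec a a).trace = ∑ i, a i ^ 2 := by
  simp [Matrix.trace, Matrix.diag, vecMulVec_apply, sq]

end Stmt13Aux


open Stmt13Aux in
/-- Elliptical potential lemma: with `‖x_s‖₂ ≤ 1` for `1 ≤ s ≤ t`, `α > 0` and
`V̄_s = α·I + ∑_{j=1}^s x_j x_jᵀ`: (i) if `α ≥ 1` then
`∑_{s=1}^t ‖x_s‖²_{V̄_{s-1}⁻¹} ≤ 2·log(det(V̄_t)/α^d)`, and (ii)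
`det(V̄_t) ≤ (α + t/d)^d`. -/
theorem stmt_13 (d t : ℕ) (x : ℕ → Fin d → ℝ)
    (hx : ∀ s, 1 ≤ s → s ≤ t → Real.sqrt (∑ i, x s i ^ 2) ≤ 1)
    (α : ℝ) (hα : 0 < α)
    (Vbar : ℕ → Matrix (Fin d) (Fin d) ℝ)
    (hVbar : ∀ s, Vbar s = α • (1 : Matrix (Fin d) (Fin d) ℝ) +
      ∑ j ∈ Finset.Icc 1 s, vecMulVec (x j) (x j)) :
    (1 ≤ α →
      ∑ s ∈ Finset.Icc 1 t, x s ⬝ᵥ ((Vbar (s - 1))⁻¹ *ᵥ x s) ≤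
        2 * Real.log ((Vbar t).det / α ^ d)) ∧
      (Vbar t).det ≤ (α + (t : ℝ) / d) ^ d := by
  have hV : ∀ s, Vbar s = Mm α x s := fun s => hVbar s
  have hpd : ∀ s, (Mm α x s).PosDef := fun s => posdef hα x s
  have hxsq : ∀ s, 1 ≤ s → s ≤ t → ∑ i, x s i ^ 2 ≤ 1 := by
    intro s h1 h2
    have h := hx s h1 h2
    have hnn : (0 : ℝ) ≤ ∑ i, x s i ^ 2 := Finset.sum_nonneg fun i _ => sq_nonneg _
    nlinarith [Real.sq_sqrt hnn, Real.sqrt_nonneg (∑ i, x s i ^ 2)]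
  constructor
  · intro hα1
    simp only [hV]
    set f : ℕ → ℝ := fun s => Real.log ((Mm α x s).det) with hf
    have step : ∀ s ∈ Finset.Icc 1 t,
        x s ⬝ᵥ ((Mm α x (s - 1))⁻¹ *ᵥ x s) ≤ 2 * (f s - f (s - 1)) := by
      intro s hs
      rw [Finset.mem_Icc] at hs
      obtain ⟨hs1, hst⟩ := hs
      set A := Mm α x (s - 1) with hA
      set u := x s ⬝ᵥ (A⁻¹ *ᵥ x s) with hu
      have hu0 : 0 ≤ u := by
        have h := (hpd (s - 1)).posSemidef.inv.dotProduct_mulVec_nonneg (x s)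
        rwa [star_trivial] at h
      have hu1 : u ≤ 1 := by
        set y := A⁻¹ *ᵥ x s with hy
        have hAy : A *ᵥ y = x s := by
          rw [hy, Matrix.mulVec_mulVec,
            Matrix.mul_nonsing_inv _ (isUnit_iff_ne_zero.mpr (hpd (s - 1)).det_pos.ne'),
            Matrix.one_mulVec]
        have hq := quad α x (s - 1) y
        rw [show Mm α x (s-1) = A from rfl, hAy] at hq
        have hyx : y ⬝ᵥ x s = u := by rw [hu, dotProduct_comm]
        have hyy : 0 ≤ y ⬝ᵥ y := Finset.sum_nonneg fun i _ => mul_self_nonneg _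
        have hsumnn : 0 ≤ ∑ j ∈ Finset.Icc 1 (s - 1), (x j ⬝ᵥ y) ^ 2 :=
          Finset.sum_nonneg fun j _ => sq_nonneg _
        have hyyu : y ⬝ᵥ y ≤ u := by nlinarith
        have hcs : (x s ⬝ᵥ y) ^ 2 ≤ (∑ i, x s i ^ 2) * (y ⬝ᵥ y) := by
          have h := Finset.sum_mul_sq_le_sq_mul_sq Finset.univ (x s) y
          simpa [dotProduct, sq] using h
        have hxu : x s ⬝ᵥ y = u := by rw [← hyx, dotProduct_comm]
        nlinarith [hxsq s hs1 hst]
      have hdet : (Mm α x s).det = A.det * (1 + u) := by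
        rw [Mm_succ α x hs1, det_step (hpd (s - 1)) (x s)]
      have hlog : Real.log (1 + u) = f s - f (s - 1) := by
        simp only [hf]
        rw [hdet, Real.log_mul (hpd (s - 1)).det_pos.ne' (by positivity)]
        ring
      calc u ≤ 2 * Real.log (1 + u) := le_two_log hu0 hu1
        _ = 2 * (f s - f (s - 1)) := by rw [hlog]
    have hsum := Finset.sum_le_sum step
    have htel : ∑ s ∈ Finset.Icc 1 t, 2 * (f s - f (s - 1)) = 2 * (f t - f 0) := by
      rw [← Finset.mul_sum, telescope]
    have hdet0 : (Mm α x 0).det = α ^ d := by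
      unfold Mm
      simp [Matrix.det_smul, Fintype.card_fin]
    have hrhs : 2 * Real.log ((Mm α x t).det / α ^ d) = 2 * (f t - f 0) := by
      rw [Real.log_div (hpd t).det_pos.ne' (by positivity), hf]
      simp only [hdet0]
    rw [hrhs, ← htel]
    exact hsum
  · rcases Nat.eq_zero_or_pos d with hd0 | hd
    · subst hd0
      simp [hV, Matrix.det_isEmpty]
    · have hherm := (hpd t).isHermitian
      have htr : (Mm α x t).trace ≤ α * d + t := by
        unfold Mm
        rw [Matrix.trace_add, Matrix.trace_smul, Matrix.trace_one, Matrix.trace_sum]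
        have hb : ∑ j ∈ Finset.Icc 1 t, (vecMulVec (x j) (x j)).trace ≤
            ∑ j ∈ Finset.Icc 1 t, (1 : ℝ) := by
          refine Finset.sum_le_sum fun j hj => ?_
          rw [Finset.mem_Icc] at hj
          rw [trace_vecMulVec']
          exact hxsq j hj.1 hj.2
        have hcard : ∑ j ∈ Finset.Icc 1 t, (1 : ℝ) = t := by
          rw [Finset.sum_const, Nat.card_Icc]
          simp
        rw [hcard] at hb
        simp only [smul_eq_mul, Fintype.card_fin]
        linarith
      have heig : ∑ i, hherm.eigenvalues i ≤ (α + (t : ℝ) / d) * d := by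
        rw [← trace_eq_sum_eigs hherm]
        have hdR : (0 : ℝ) < d := Nat.cast_pos.mpr hd
        have : (α + (t : ℝ) / d) * d = α * d + t := by field_simp
        rw [this]
        exact htr
      have hdet : (Mm α x t).det = ∏ i, hherm.eigenvalues i := by
        rw [hherm.det_eq_prod_eigenvalues]
        simp [RCLike.ofReal_real_eq_id]
      rw [hV t, hdet]
      exact geom_le hd (fun i => (hpd t).posSemidef.eigenvalues_nonneg i) heig
end

section
/- Let T ≥ 1 and n ≤ T be natural numbers, let m > 0 be real, and let b_1, …, b_n be real numbers with 0 ≤ b_t ≤ m/2 for every t. Then ∏_{t=1}^n (m - b_t)^{1/T} ≥ m^{n/T} · (1 - (2/(m·T))·∑_{t=1}^n b_t). -/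
open Finset

/-- Product of `(1 - c i)` is at least `1 - ∑ c i` for `c i ∈ [0,1]`. -/
lemma aux_prod_one_sub (n : ℕ) (c : ℕ → ℝ)
    (hc : ∀ t ∈ Finset.range n, 0 ≤ c t ∧ c t ≤ 1) :
    1 - ∑ t ∈ Finset.range n, c t ≤ ∏ t ∈ Finset.range n, (1 - c t) := by
  induction n with
  | zero => simp
  | succ k ih =>
    have hk : ∀ t ∈ Finset.range k, 0 ≤ c t ∧ c t ≤ 1 := fun t ht =>
      hc t (Finset.mem_range.2 (Nat.lt_succ_of_lt (Finset.mem_range.1 ht)))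
    have hck := hc k (Finset.mem_range.2 (Nat.lt_succ_self k))
    rw [Finset.prod_range_succ, Finset.sum_range_succ]
    have hprod_nonneg : 0 ≤ ∏ t ∈ Finset.range k, (1 - c t) :=
      Finset.prod_nonneg fun t ht => by linarith [(hk t ht).2]
    have hprod_le_one : ∏ t ∈ Finset.range k, (1 - c t) ≤ 1 :=
      Finset.prod_le_one (fun t ht => by linarith [(hk t ht).2])
        (fun t ht => by linarith [(hk t ht).1])
    nlinarith [ih hk, hck.1, hck.2]

/-- Key pointwise inequality: `(1 - 2x/T)^T ≤ 1 - x` for `x ∈ [0, 1/2]`, `T ≥ 1`. -/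
lemma aux_pow_le (T : ℕ) (hT : 1 ≤ T) (x : ℝ) (hx0 : 0 ≤ x) (hx : x ≤ 1 / 2) :
    (1 - 2 * x / T) ^ T ≤ 1 - x := by
  have hT0 : (0 : ℝ) < T := by exact_mod_cast hT
  have hy0 : 0 ≤ 2 * x / T := by positivity
  have hy1 : 2 * x / T ≤ 1 / T := by gcongr; linarith
  have hyle : 2 * x / T ≤ 1 := hy1.trans (by
    rw [div_le_one hT0]; exact_mod_cast hT)
  have h1 : (1 - 2 * x / T) ^ T * (1 + 2 * x / T) ^ T ≤ 1 := by
    rw [← mul_pow]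
    have : (1 - 2 * x / T) * (1 + 2 * x / T) = 1 - (2 * x / T) ^ 2 := by ring
    rw [this]
    apply pow_le_one₀ (by nlinarith) (by nlinarith)
  have hbern : 1 + 2 * x ≤ (1 + 2 * x / T) ^ T := by
    have := one_add_mul_le_pow (a := 2 * x / T) (by linarith) T
    have hTx : (T : ℝ) * (2 * x / T) = 2 * x := by field_simp
    linarith [this, hTx ▸ this]
  have hpos : (0 : ℝ) < (1 + 2 * x / T) ^ T := by positivity
  have h2 : (1 - 2 * x / T) ^ T ≤ 1 / (1 + 2 * x / T) ^ T := by
    rw [le_div_iff₀ hpos]; exact h1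
  have h3 : 1 / (1 + 2 * x / T) ^ T ≤ 1 / (1 + 2 * x) := by
    apply div_le_div_of_nonneg_left one_pos.le (by linarith) hbern
  have h4 : 1 / (1 + 2 * x) ≤ 1 - x := by
    rw [div_le_iff₀ (by linarith)]
    nlinarith
  linarith

/-- Aggregation inequality for the Nash Social Welfare: for `n ≤ T`, `m > 0`
and `0 ≤ b_t ≤ m/2` for all `t`,
`∏_{t=1}^n (m - b_t)^{1/T} ≥ m^{n/T} · (1 - (2/(m·T))·∑_{t=1}^n b_t)`,
where powers are real powers. -/
theorem stmt_18 (T n : ℕ) (hT : 1 ≤ T) (hn : n ≤ T) (m : ℝ) (hm : 0 < m)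
    (b : ℕ → ℝ) (hb : ∀ t ∈ Finset.range n, 0 ≤ b t ∧ b t ≤ m / 2) :
    (∏ t ∈ Finset.range n, (m - b t) ^ ((1 : ℝ) / T)) ≥
      m ^ ((n : ℝ) / T) * (1 - 2 / (m * T) * ∑ t ∈ Finset.range n, b t) := by
  have hT0 : (0 : ℝ) < T := by exact_mod_cast hT
  set x : ℕ → ℝ := fun t => b t / m with hx
  have hxb : ∀ t ∈ Finset.range n, 0 ≤ x t ∧ x t ≤ 1 / 2 := by
    intro t ht
    obtain ⟨h1, h2⟩ := hb t ht
    constructor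
    · positivity
    · rw [div_le_iff₀ hm]; linarith
  -- pointwise: (m - b t)^(1/T) ≥ m^(1/T) * (1 - 2 * x t / T)
  have key : ∀ t ∈ Finset.range n,
      m ^ ((1:ℝ)/T) * (1 - 2 * x t / T) ≤ (m - b t) ^ ((1:ℝ)/T) := by
    intro t ht
    obtain ⟨h0, h2⟩ := hxb t ht
    have hc0 : 0 ≤ 1 - 2 * x t / T := by
      have h' : 2 * x t / T ≤ 1 := by
        rw [div_le_one hT0]
        have : (1:ℝ) ≤ T := by exact_mod_cast hT
        linarith
      linarith
    have hpow : (1 - 2 * x t / T) ^ T ≤ 1 - x t := aux_pow_le T hT (x t) h0 h2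
    have hroot : (1 - 2 * x t / T) ≤ (1 - x t) ^ ((1:ℝ)/T) := by
      have h1 : ((1 - 2 * x t / T) ^ T : ℝ) ^ ((1:ℝ)/T) ≤ (1 - x t) ^ ((1:ℝ)/T) :=
        Real.rpow_le_rpow (by positivity) hpow (by positivity)
      rwa [← Real.rpow_natCast (1 - 2 * x t / T) T, ← Real.rpow_mul hc0,
        mul_one_div, div_self (ne_of_gt hT0), Real.rpow_one] at h1
    calc m ^ ((1:ℝ)/T) * (1 - 2 * x t / T)
        ≤ m ^ ((1:ℝ)/T) * (1 - x t) ^ ((1:ℝ)/T) := by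
          apply mul_le_mul_of_nonneg_left hroot (Real.rpow_nonneg hm.le _)
      _ = (m * (1 - x t)) ^ ((1:ℝ)/T) := by
          rw [← Real.mul_rpow hm.le (by linarith)]
      _ = (m - b t) ^ ((1:ℝ)/T) := by
          congr 1
          simp only [hx]
          field_simp [hx]
  have hprodge : ∏ t ∈ Finset.range n, (m ^ ((1:ℝ)/T) * (1 - 2 * x t / T))
      ≤ ∏ t ∈ Finset.range n, (m - b t) ^ ((1:ℝ)/T) := by
    apply Finset.prod_le_prod
    · intro t ht
      obtain ⟨h0, h2⟩ := hxb t ht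
      have h' : 2 * x t / T ≤ 1 := by
        rw [div_le_one hT0]
        have : (1:ℝ) ≤ T := by exact_mod_cast hT
        linarith
      have hm' : (0:ℝ) ≤ m ^ ((1:ℝ)/T) := Real.rpow_nonneg hm.le _
      nlinarith
    · exact key
  rw [Finset.prod_mul_distrib, Finset.prod_const, Finset.card_range] at hprodge
  have hm_pow : (m ^ ((1:ℝ)/T)) ^ n = m ^ ((n:ℝ)/T) := by
    rw [← Real.rpow_natCast (m ^ ((1:ℝ)/T)) n, ← Real.rpow_mul hm.le]
    congr 1
    ring
  rw [hm_pow] at hprodge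
  -- now lower bound ∏ (1 - 2 x t / T)
  have hc : ∀ t ∈ Finset.range n, 0 ≤ 2 * x t / T ∧ 2 * x t / T ≤ 1 := by
    intro t ht
    obtain ⟨h0, h2⟩ := hxb t ht
    refine ⟨by positivity, ?_⟩
    rw [div_le_one hT0]
    have : (1:ℝ) ≤ T := by exact_mod_cast hT
    linarith
  have hps := aux_prod_one_sub n (fun t => 2 * x t / T) hc
  have hsum : ∑ t ∈ Finset.range n, 2 * x t / T
      = 2 / (m * T) * ∑ t ∈ Finset.range n, b t := by
    rw [Finset.mul_sum]
    apply Finset.sum_congr rfl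
    intro t _
    simp only [hx]
    field_simp [hx]
  rw [hsum] at hps
  calc m ^ ((n:ℝ)/T) * (1 - 2 / (m * T) * ∑ t ∈ Finset.range n, b t)
      ≤ m ^ ((n:ℝ)/T) * ∏ t ∈ Finset.range n, (1 - 2 * x t / T) := by
        apply mul_le_mul_of_nonneg_left hps (Real.rpow_nonneg hm.le _)
    _ ≤ ∏ t ∈ Finset.range n, (m - b t) ^ ((1:ℝ)/T) := hprodge
end
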